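/- If X is a Stäckel-compact Hausdorff space and Y is a compact Hausdorff space, then the product X × Y is Stäckel-compact; moreover, the lexicographic order built from symmetric topological well orders on X and Y witnesses this. -/

import Mathlib

def StackelCompact (X : Type*) [TopologicalSpace X] : Prop :=
  ∃ r : X → X → Prop, IsLinearOrder X r ∧
    ∀ F : Set X, IsClosed F → F.Nonempty →
      (∃ a ∈ F, ∀ x ∈ F, r a x) ∧ (∃ b ∈ F, ∀ x ∈ F, r x b)

/-- The lexicographic order on a product built from orders on the factors. -/
def prodLex {X Y : Type*} (rX : X → X → Prop) (rY : Y → Y → Prop)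
    (p q : X × Y) : Prop :=
  (rX p.1 q.1 ∧ p.1 ≠ q.1) ∨ (p.1 = q.1 ∧ rY p.2 q.2)

/-- If X is Stäckel-compact Hausdorff (with symmetric topological well order rX) and Y is
compact Hausdorff (with symmetric topological well order rY), then X × Y is
Stäckel-compact; moreover the lexicographic order built from rX and rY witnesses this. -/
theorem stackelCompact_prod {X Y : Type*} [TopologicalSpace X] [TopologicalSpace Y]
    [T2Space X] [T2Space Y] [CompactSpace Y]
    (rX : X → X → Prop) (rY : Y → Y → Prop)
    (hlinX : IsLinearOrder X rX) (hlinY : IsLinearOrder Y rY)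
    (hX : ∀ F : Set X, IsClosed F → F.Nonempty →
      (∃ a ∈ F, ∀ x ∈ F, rX a x) ∧ (∃ b ∈ F, ∀ x ∈ F, rX x b))
    (hY : ∀ F : Set Y, IsClosed F → F.Nonempty →
      (∃ a ∈ F, ∀ x ∈ F, rY a x) ∧ (∃ b ∈ F, ∀ x ∈ F, rY x b)) :
    StackelCompact (X × Y) ∧
    (IsLinearOrder (X × Y) (prodLex rX rY) ∧
      ∀ F : Set (X × Y), IsClosed F → F.Nonempty →
        (∃ a ∈ F, ∀ x ∈ F, prodLex rX rY a x) ∧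
        (∃ b ∈ F, ∀ x ∈ F, prodLex rX rY x b)) := by
  have reflX := hlinX.toIsPartialOrder.toIsPreorder.toRefl.refl
  have transX := hlinX.toIsPartialOrder.toIsPreorder.toIsTrans.trans
  have antisymmX := hlinX.toIsPartialOrder.toAntisymm.antisymm
  have totalX := hlinX.toTotal.total
  have reflY := hlinY.toIsPartialOrder.toIsPreorder.toRefl.refl
  have transY := hlinY.toIsPartialOrder.toIsPreorder.toIsTrans.trans
  have antisymmY := hlinY.toIsPartialOrder.toAntisymm.antisymm
  have totalY := hlinY.toTotal.total
  have hlin : IsLinearOrder (X × Y) (prodLex rX rY) := by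
    haveI hr : IsRefl (X × Y) (prodLex rX rY) := by
      constructor
      intro p; exact Or.inr ⟨rfl, reflY _⟩
    haveI ht : IsTrans (X × Y) (prodLex rX rY) := by
      constructor
      rintro p q s (⟨h1, h2⟩ | ⟨h1, h2⟩) (⟨h3, h4⟩ | ⟨h3, h4⟩)
      · refine Or.inl ⟨transX _ _ _ h1 h3, fun he => ?_⟩
        exact h2 (antisymmX _ _ h1 (he ▸ h3))
      · exact Or.inl ⟨h3 ▸ h1, h3 ▸ h2⟩
      · exact Or.inl ⟨h1 ▸ h3, fun he => h4 (h1.symm.trans he)⟩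
      · exact Or.inr ⟨h1.trans h3, transY _ _ _ h2 h4⟩
    haveI ha : IsAntisymm (X × Y) (prodLex rX rY) := by
      constructor
      rintro p q (⟨h1, h2⟩ | ⟨h1, h2⟩) (⟨h3, h4⟩ | ⟨h3, h4⟩)
      · exact absurd (antisymmX _ _ h1 h3) h2
      · exact absurd h3.symm h2
      · exact absurd h1.symm h4
      · exact Prod.ext h1 (antisymmY _ _ h2 h4)
    haveI htot : IsTotal (X × Y) (prodLex rX rY) := by
      constructor
      intro p q
      rcases eq_or_ne p.1 q.1 with he | hne
      · rcases totalY p.2 q.2 with h | h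
        · exact Or.inl (Or.inr ⟨he, h⟩)
        · exact Or.inr (Or.inr ⟨he.symm, h⟩)
      · rcases totalX p.1 q.1 with h | h
        · exact Or.inl (Or.inl ⟨h, hne⟩)
        · exact Or.inr (Or.inl ⟨h, hne.symm⟩)
    haveI : IsPreorder (X × Y) (prodLex rX rY) := ⟨⟩
    haveI : IsPartialOrder (X × Y) (prodLex rX rY) := ⟨⟩
    exact ⟨⟩
  have key : ∀ F : Set (X × Y), IsClosed F → F.Nonempty →
      (∃ a ∈ F, ∀ x ∈ F, prodLex rX rY a x) ∧
      (∃ b ∈ F, ∀ x ∈ F, prodLex rX rY x b) := by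
    intro F hF hne
    have hproj : IsClosed (Prod.fst '' F) := isClosedMap_fst_of_compactSpace F hF
    have hprojne : (Prod.fst '' F).Nonempty := hne.image _
    obtain ⟨⟨a₀, ha₀F, ha₀min⟩, ⟨b₀, hb₀F, hb₀max⟩⟩ := hX _ hproj hprojne
    have slice : ∀ x₀ : X, x₀ ∈ Prod.fst '' F →
        IsClosed {y | (x₀, y) ∈ F} ∧ {y | (x₀, y) ∈ F}.Nonempty := by
      intro x₀ hx₀
      refine ⟨hF.preimage (Continuous.prodMk_right x₀), ?_⟩
      obtain ⟨p, hpF, hp⟩ := hx₀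
      exact ⟨p.2, by simpa [← hp] using hpF⟩
    obtain ⟨hca, hna⟩ := slice a₀ ha₀F
    obtain ⟨hcb, hnb⟩ := slice b₀ hb₀F
    obtain ⟨⟨ya, hyaF, hyamin⟩, -⟩ := hY _ hca hna
    obtain ⟨-, ⟨yb, hybF, hybmax⟩⟩ := hY _ hcb hnb
    constructor
    · refine ⟨(a₀, ya), hyaF, ?_⟩
      rintro ⟨x, y⟩ hxy
      have hx : x ∈ Prod.fst '' F := ⟨(x, y), hxy, rfl⟩
      rcases eq_or_ne a₀ x with he | hne
      · exact Or.inr ⟨he, hyamin y (by simpa [he] using hxy)⟩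
      · exact Or.inl ⟨ha₀min x hx, hne⟩
    · refine ⟨(b₀, yb), hybF, ?_⟩
      rintro ⟨x, y⟩ hxy
      have hx : x ∈ Prod.fst '' F := ⟨(x, y), hxy, rfl⟩
      rcases eq_or_ne x b₀ with he | hne
      · exact Or.inr ⟨he, hybmax y (by simpa [← he] using hxy)⟩
      · exact Or.inl ⟨hb₀max x hx, hne⟩
  exact ⟨⟨prodLex rX rY, hlin, key⟩, hlin, key⟩
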